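/- arXiv:2502.02319 — 3 statements merged into one kernel-verified Lean document; each statement's English description precedes it below -/
import Mathlib

section
/- Let B be a positive definite matrix with spectral decomposition B = Σᵢ bᵢ |bᵢ⟩⟨bᵢ|, A any matrix, and μ ∈ (0,1). Then ∫₀^∞ (B+t)⁻¹ A (B+t)⁻¹ t^μ dt = (π/sin(πμ)) · Σ_{i,j} [(bᵢ^μ − bⱼ^μ)/(bᵢ − bⱼ)] |bᵢ⟩⟨bᵢ| A |bⱼ⟩⟨bⱼ|, where for bᵢ = bⱼ the quotient is interpreted as the derivative μ·bᵢ^(μ−1). -/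
open scoped Kronecker Matrix ComplexOrder

attribute [local instance] Matrix.frobeniusNormedAddCommGroup Matrix.frobeniusNormedSpace

/-- Matrix power via functional calculus on eigenvalues (with the convention
`0 ^ p = 0` for `p ≠ 0`, giving powers on the support). -/
noncomputable def mpow {n : Type*} [Fintype n] [DecidableEq n]
    (A : Matrix n n ℂ) (p : ℝ) : Matrix n n ℂ :=
  cfc (fun x : ℝ => x ^ p) A

/-- `Q_β(ρ‖σ) = Tr((σ^((1-β)/(2β)) ρ σ^((1-β)/(2β)))^β)`. -/
noncomputable def sandQ {n : Type*} [Fintype n] [DecidableEq n]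
    (β : ℝ) (ρ σ : Matrix n n ℂ) : ℝ :=
  ((cfc (fun x : ℝ => x ^ β)
      (mpow σ ((1 - β) / (2 * β)) * ρ * mpow σ ((1 - β) / (2 * β)))).trace).re

/-- Umegaki relative entropy (base 2). -/
noncomputable def umegaki {n : Type*} [Fintype n] [DecidableEq n]
    (ρ σ : Matrix n n ℂ) : ℝ :=
  ((ρ * (cfc (fun x : ℝ => Real.logb 2 x) ρ - cfc (fun x : ℝ => Real.logb 2 x) σ)).trace).re

/-- Sandwiched Rényi divergence for `α ≠ 1`. -/
noncomputable def sandD {n : Type*} [Fintype n] [DecidableEq n]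
    (α : ℝ) (ρ σ : Matrix n n ℂ) : ℝ :=
  (α - 1)⁻¹ * Real.logb 2 (sandQ α ρ σ / (ρ.trace).re)

/-- Sandwiched Rényi divergence, extended by continuity (Umegaki) at `α = 1`. -/
noncomputable def sandDfull {n : Type*} [Fintype n] [DecidableEq n]
    (α : ℝ) (ρ σ : Matrix n n ℂ) : ℝ :=
  if α = 1 then umegaki ρ σ else sandD α ρ σ

/-- Petz Rényi divergence. -/
noncomputable def petzD {n : Type*} [Fintype n] [DecidableEq n]
    (α : ℝ) (ρ σ : Matrix n n ℂ) : ℝ :=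
  (α - 1)⁻¹ * Real.logb 2 (((mpow ρ α * mpow σ (1 - α)).trace).re / (ρ.trace).re)

/-- Sandwiched conditional Rényi entropy `H_α(A|B) = -inf_{σ_B} D̃_α(ρ_{AB}‖I_A⊗σ_B)`,
infimum over density operators on `B`. -/
noncomputable def condH {a b : Type*} [Fintype a] [DecidableEq a] [Fintype b] [DecidableEq b]
    (α : ℝ) (ρ : Matrix (a × b) (a × b) ℂ) : ℝ :=
  - sInf {x : ℝ | ∃ σ : Matrix b b ℂ, σ.PosSemidef ∧ σ.trace = 1 ∧
      x = sandDfull α ρ ((1 : Matrix a a ℂ) ⊗ₖ σ)}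


section aux
open MeasureTheory Set Real



-- real Beta integral on Ioo
lemma beta_ioo {u v : ℝ} (hu : 0 < u) (hv : 0 < v) :
    IntegrableOn (fun x : ℝ => x ^ (u-1) * (1-x) ^ (v-1)) (Ioo 0 1) ∧
    ∫ x in Ioo (0:ℝ) 1, x ^ (u-1) * (1-x) ^ (v-1)
      = Real.Gamma u * Real.Gamma v / Real.Gamma (u+v) := by
  have hconv := Complex.betaIntegral_convergent (u := u) (v := v) (by simpa) (by simpa)
  have hcongr : ∀ x ∈ Ioo (0:ℝ) 1,
      ((x:ℂ) ^ ((u:ℂ)-1) * (1-(x:ℂ)) ^ ((v:ℂ)-1)) = ((x ^ (u-1) * (1-x) ^ (v-1) : ℝ) : ℂ) := by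
    intro x hx
    rw [Complex.ofReal_mul, Complex.ofReal_cpow hx.1.le,
      Complex.ofReal_cpow (by linarith [hx.2] : (0:ℝ) ≤ 1 - x)]
    push_cast
    ring
  have hIoc : IntegrableOn (fun x : ℝ => (x:ℂ) ^ ((u:ℂ)-1) * (1-(x:ℂ)) ^ ((v:ℂ)-1)) (Ioc 0 1) := by
    simpa [intervalIntegrable_iff_integrableOn_Ioc_of_le (by norm_num : (0:ℝ) ≤ 1)] using hconv
  have hIooC : IntegrableOn (fun x : ℝ => (x:ℂ) ^ ((u:ℂ)-1) * (1-(x:ℂ)) ^ ((v:ℂ)-1)) (Ioo 0 1) :=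
    hIoc.mono_set Ioo_subset_Ioc_self
  have hint : IntegrableOn (fun x : ℝ => x ^ (u-1) * (1-x) ^ (v-1)) (Ioo 0 1) := by
    have := hIooC.re
    refine (integrable_congr ?_).mp this
    filter_upwards [ae_restrict_mem measurableSet_Ioo] with x hx
    simp [hcongr x hx]
  refine ⟨hint, ?_⟩
  have hbeta : Complex.betaIntegral u v
      = ((∫ x in Ioo (0:ℝ) 1, x ^ (u-1) * (1-x) ^ (v-1) : ℝ) : ℂ) := by
    rw [Complex.betaIntegral, intervalIntegral.integral_of_le (by norm_num : (0:ℝ) ≤ 1),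
      ← integral_Ioc_eq_integral_Ioo (f := fun x : ℝ => x ^ (u-1) * (1-x) ^ (v-1)),
      show ((∫ t in Ioc (0:ℝ) 1, t ^ (u-1)*(1-t)^(v-1) : ℝ) : ℂ) = ∫ t in Ioc (0:ℝ) 1, ((t ^ (u-1)*(1-t)^(v-1) : ℝ) : ℂ) from integral_ofReal.symm]
    refine setIntegral_congr_ae measurableSet_Ioc ?_
    filter_upwards [] with x
    intro hx
    rcases eq_or_lt_of_le hx.2 with h1 | h1
    · subst h1
      by_cases hv1 : v = 1
      · subst hv1; norm_num
      · have h2 : (v:ℂ) - 1 ≠ 0 := sub_ne_zero.mpr (by exact_mod_cast hv1)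
        simp [Complex.one_cpow, Complex.zero_cpow h2,
          Real.zero_rpow (sub_ne_zero.mpr hv1), Real.one_rpow]
    · exact hcongr x ⟨hx.1, h1⟩
  have := Complex.Gamma_mul_Gamma_eq_betaIntegral
    (s := u) (t := v) (by simpa) (by simpa)
  rw [hbeta] at this
  have huv : (Complex.Gamma (u+v)) ≠ 0 := Complex.Gamma_ne_zero_of_re_pos (by simp; positivity)
  have hG : ∀ r : ℝ, Complex.Gamma (r:ℂ) = (Real.Gamma r : ℂ) := fun r => Complex.Gamma_ofReal r
  rw [hG u, hG v] at this
  have h2 : ((u:ℂ) + v) = ((u + v : ℝ) : ℂ) := by push_cast; ring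
  rw [h2, hG (u+v)] at this
  have : ((Real.Gamma u * Real.Gamma v : ℝ) : ℂ)
      = ((Real.Gamma (u+v) * ∫ x in Ioo (0:ℝ) 1, x ^ (u-1) * (1-x) ^ (v-1) : ℝ) : ℂ) := by
    push_cast; exact this
  have h3 := Complex.ofReal_injective this
  field_simp
  linarith [h3]

lemma subst_setup {c : ℝ} (hc : 0 < c) :
    (∀ x ∈ Ioo (0:ℝ) 1, HasDerivWithinAt (fun x => c * x / (1 - x)) (c / (1-x)^2) (Ioo 0 1) x)
    ∧ InjOn (fun x => c * x / (1 - x)) (Ioo (0:ℝ) 1)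
    ∧ (fun x => c * x / (1 - x)) '' (Ioo (0:ℝ) 1) = Ioi 0 := by
  refine ⟨?_, ?_, ?_⟩
  · intro x hx
    have h1 : 1 - x ≠ 0 := by have := hx.2; intro h; linarith [sub_eq_zero.mp h]
    have := ((hasDerivAt_id x).const_mul c).div ((hasDerivAt_id x).const_sub 1) h1
    simp only [mul_one, id] at this
    rw [show ((fun y => c * y) / fun x => 1 - x) = (fun x => c * x / (1 - x)) from rfl] at this
    refine this.hasDerivWithinAt.congr_deriv ?_
    ring
  · intro x hx y hy h
    have h1 : 1 - x ≠ 0 := by have := hx.2; intro h; linarith [sub_eq_zero.mp h]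
    have h2 : 1 - y ≠ 0 := by have := hy.2; intro h; linarith [sub_eq_zero.mp h]
    field_simp at h
    have hxy : c * x = c * y := by nlinarith
    exact mul_left_cancel₀ hc.ne' hxy
  · ext y
    simp only [mem_image, mem_Ioi]
    constructor
    · rintro ⟨x, hx, rfl⟩
      have h1 : 0 < 1 - x := by linarith [hx.2]
      exact div_pos (mul_pos hc hx.1) h1
    · intro hy
      refine ⟨y / (c + y), ⟨div_pos hy (by linarith), ?_⟩, ?_⟩
      · rw [div_lt_one (by linarith)]; linarith
      · have h3 : c + y ≠ 0 := by positivity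
        field_simp
        simp [hc.ne']

lemma int_one {c μ : ℝ} (hc : 0 < c) (hμ0 : 0 < μ) (hμ1 : μ < 1) :
    IntegrableOn (fun t : ℝ => t^(μ-1) * (c+t)⁻¹) (Ioi 0) ∧
    ∫ t in Ioi (0:ℝ), t^(μ-1) * (c+t)⁻¹ = π / Real.sin (π*μ) * c^(μ-1) := by
  obtain ⟨hd, hinj, him⟩ := subst_setup hc
  have hbeta := beta_ioo hμ0 (by linarith : (0:ℝ) < 1 - μ)
  have key : ∀ x ∈ Ioo (0:ℝ) 1,
      |c/(1-x)^2| • ((c*x/(1-x))^(μ-1) * (c + c*x/(1-x))⁻¹)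
      = c^(μ-1) • (x^(μ-1) * (1-x)^((1-μ)-1)) := by
    intro x hx
    have h1 : 0 < 1 - x := by linarith [hx.2]
    have e0 : c + c*x/(1-x) = c/(1-x) := by field_simp; ring
    rw [smul_eq_mul, smul_eq_mul, e0, abs_of_pos (div_pos hc (pow_pos h1 2)),
      Real.div_rpow (mul_pos hc hx.1).le h1.le, Real.mul_rpow hc.le hx.1.le,
      show (1:ℝ)-μ-1 = -1 + (1-μ) by ring, Real.rpow_add h1, Real.rpow_neg_one,
      show (1:ℝ)-μ = -(μ-1) by ring, Real.rpow_neg h1.le]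
    have h2 : (1-x)^(μ-1) ≠ 0 := (Real.rpow_pos_of_pos h1 _).ne'
    field_simp
  have hint : IntegrableOn (fun t : ℝ => t^(μ-1) * (c+t)⁻¹) (Ioi 0) := by
    rw [← him]
    rw [integrableOn_image_iff_integrableOn_abs_deriv_smul measurableSet_Ioo hd hinj]
    refine (integrable_congr ?_).mpr (hbeta.1.smul (c^(μ-1)))
    filter_upwards [ae_restrict_mem measurableSet_Ioo] with x hx
    exact key x hx
  refine ⟨hint, ?_⟩
  rw [← him, integral_image_eq_integral_abs_deriv_smul measurableSet_Ioo hd hinj,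
    setIntegral_congr_ae measurableSet_Ioo
      (Filter.Eventually.of_forall (fun x => key x)),
    integral_smul, hbeta.2]
  rw [show μ + (1-μ) = 1 by ring, Real.Gamma_one, div_one,
    Real.Gamma_mul_Gamma_one_sub, smul_eq_mul]
  ring

lemma int_two {c μ : ℝ} (hc : 0 < c) (hμ0 : 0 < μ) (hμ1 : μ < 1) :
    IntegrableOn (fun t : ℝ => t^μ * ((c+t)⁻¹ * (c+t)⁻¹)) (Ioi 0) ∧
    ∫ t in Ioi (0:ℝ), t^μ * ((c+t)⁻¹ * (c+t)⁻¹)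
      = π / Real.sin (π*μ) * (μ * c^(μ-1)) := by
  obtain ⟨hd, hinj, him⟩ := subst_setup hc
  have hbeta := beta_ioo (by linarith : (0:ℝ) < μ + 1) (by linarith : (0:ℝ) < 1 - μ)
  have key : ∀ x ∈ Ioo (0:ℝ) 1,
      |c/(1-x)^2| • ((c*x/(1-x))^μ * ((c + c*x/(1-x))⁻¹ * (c + c*x/(1-x))⁻¹))
      = c^(μ-1) • (x^(μ+1-1) * (1-x)^((1-μ)-1)) := by
    intro x hx
    have h1 : 0 < 1 - x := by linarith [hx.2]
    have e0 : c + c*x/(1-x) = c/(1-x) := by field_simp; ring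
    rw [smul_eq_mul, smul_eq_mul, e0, abs_of_pos (div_pos hc (pow_pos h1 2)),
      Real.div_rpow (mul_pos hc hx.1).le h1.le, Real.mul_rpow hc.le hx.1.le,
      show μ+1-1 = μ by ring,
      show (1:ℝ)-μ-1 = -μ by ring, Real.rpow_neg h1.le,
      show (μ:ℝ)-1 = -1 + μ by ring, Real.rpow_add hc, Real.rpow_neg_one]
    have h2 : (1-x)^μ ≠ 0 := (Real.rpow_pos_of_pos h1 _).ne'
    field_simp
  have hint : IntegrableOn (fun t : ℝ => t^μ * ((c+t)⁻¹ * (c+t)⁻¹)) (Ioi 0) := by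
    rw [← him]
    rw [integrableOn_image_iff_integrableOn_abs_deriv_smul measurableSet_Ioo hd hinj]
    refine (integrable_congr ?_).mpr (hbeta.1.smul (c^(μ-1)))
    filter_upwards [ae_restrict_mem measurableSet_Ioo] with x hx
    exact key x hx
  refine ⟨hint, ?_⟩
  rw [← him, integral_image_eq_integral_abs_deriv_smul measurableSet_Ioo hd hinj,
    setIntegral_congr_ae measurableSet_Ioo
      (Filter.Eventually.of_forall (fun x => key x)),
    integral_smul, hbeta.2]
  rw [show μ + 1 + (1-μ) = 2 by ring, Real.Gamma_two,
    Real.Gamma_add_one hμ0.ne', div_one, mul_assoc μ,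
    Real.Gamma_mul_Gamma_one_sub, smul_eq_mul]
  ring

namespace StmtAux
variable {n : Type*} [Fintype n] [DecidableEq n]


lemma hPmul (v : n → (n → ℂ))
    (hortho : ∀ i j, star (v i) ⬝ᵥ v j = if i = j then 1 else 0) (i j : n) :
    Matrix.vecMulVec (v i) (star (v i)) * Matrix.vecMulVec (v j) (star (v j))
      = if i = j then Matrix.vecMulVec (v i) (star (v i)) else 0 := by
  have h := hortho i j
  simp only [dotProduct, Pi.star_apply] at h
  ext k l
  simp only [Matrix.mul_apply, Matrix.vecMulVec_apply, Pi.star_apply]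
  have e : ∀ m, v i k * star (v i m) * (v j m * star (v j l))
      = (v i k * star (v j l)) * (star (v i m) * v j m) := fun m => by ring
  rw [Finset.sum_congr rfl (fun m _ => e m), ← Finset.mul_sum, h]
  split_ifs with hij
  · subst hij; simp [Matrix.vecMulVec_apply]
  · simp

lemma hPsum (v : n → (n → ℂ))
    (hortho : ∀ i j, star (v i) ⬝ᵥ v j = if i = j then 1 else 0) :
    ∑ i, Matrix.vecMulVec (v i) (star (v i)) = 1 := by
  set V : Matrix n n ℂ := Matrix.of (fun k i => v i k) with hV
  have h1 : Vᴴ * V = 1 := by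
    ext i j
    have h := hortho i j
    simp only [dotProduct, Pi.star_apply] at h
    simp only [Matrix.mul_apply, Matrix.conjTranspose_apply, hV, Matrix.of_apply,
      Matrix.one_apply]
    simpa using h
  have h2 : V * Vᴴ = 1 := mul_eq_one_comm.mp h1
  rw [← h2]
  ext k l
  simp [Matrix.sum_apply, Matrix.vecMulVec_apply, Matrix.mul_apply, hV,
    Matrix.conjTranspose_apply, mul_comm]

lemma spectral_inv (B : Matrix n n ℂ) (b : n → ℝ) (v : n → (n → ℂ))
    (hb : ∀ i, 0 < b i)
    (hortho : ∀ i j, star (v i) ⬝ᵥ v j = if i = j then 1 else 0)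
    (hB : B = ∑ i, (b i : ℂ) • Matrix.vecMulVec (v i) (star (v i)))
    {t : ℝ} (ht : 0 < t) :
    (B + t • 1)⁻¹ = ∑ i, (((b i + t : ℝ) : ℂ))⁻¹ • Matrix.vecMulVec (v i) (star (v i)) := by
  set P : n → Matrix n n ℂ := fun i => Matrix.vecMulVec (v i) (star (v i)) with hPdef
  have hBt : B + t • 1 = ∑ i, (((b i + t : ℝ) : ℂ)) • P i := by
    rw [hB, ← hPsum v hortho, show (t : ℝ) • (∑ i, P i) = ∑ i, ((t:ℝ):ℂ) • P i by
      rw [Finset.smul_sum]; exact Finset.sum_congr rfl fun i _ => (algebraMap_smul ℂ t (P i)).symm,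
      ← Finset.sum_add_distrib]
    refine Finset.sum_congr rfl fun i _ => ?_
    rw [← add_smul]
    norm_cast
  apply Matrix.inv_eq_right_inv
  rw [hBt, Finset.sum_mul]
  have : ∀ i ∈ Finset.univ, ((((b i + t : ℝ) : ℂ)) • P i) * (∑ j, (((b j + t : ℝ) : ℂ))⁻¹ • P j)
      = P i := by
    intro i _
    rw [Finset.mul_sum]
    have : ∀ j ∈ Finset.univ, (((b i + t : ℝ) : ℂ) • P i) * ((((b j + t : ℝ) : ℂ))⁻¹ • P j)
        = if j = i then P i else 0 := by
      intro j _
      rw [Matrix.smul_mul, Matrix.mul_smul, smul_smul, hPdef]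
      simp only [hPmul v hortho i j]
      split_ifs with h1 h2 h2
      · subst h1
        rw [mul_inv_cancel₀ (by exact_mod_cast (by linarith [hb i] : (b i + t : ℝ) ≠ 0)), one_smul]
      · exact absurd h1.symm h2
      · exact absurd h2.symm h1
      · simp
    rw [Finset.sum_congr rfl this]
    simp
  rw [Finset.sum_congr rfl this]
  exact hPsum v hortho

lemma int_main {a b μ : ℝ} (ha : 0 < a) (hb : 0 < b) (hμ0 : 0 < μ) (hμ1 : μ < 1) :
    IntegrableOn (fun t : ℝ => t^μ * ((a+t)⁻¹ * (b+t)⁻¹)) (Ioi 0) ∧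
    ∫ t in Ioi (0:ℝ), t^μ * ((a+t)⁻¹ * (b+t)⁻¹)
      = π / Real.sin (π*μ) *
        (if a = b then μ * a^(μ-1) else (a^μ - b^μ)/(a-b)) := by
  by_cases hab : a = b
  · subst hab
    simpa using int_two ha hμ0 hμ1
  · have hone_a := int_one ha hμ0 hμ1
    have hone_b := int_one hb hμ0 hμ1
    have hab' : a - b ≠ 0 := sub_ne_zero.mpr hab
    have hFeq : ∀ t ∈ Ioi (0:ℝ), t^μ * ((a+t)⁻¹ * (b+t)⁻¹)
        = (a/(a-b)) * (t^(μ-1) * (a+t)⁻¹) - (b/(a-b)) * (t^(μ-1) * (b+t)⁻¹) := by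
      intro t ht
      have ht0 : (0:ℝ) < t := ht
      have hat : a + t ≠ 0 := by positivity
      have hbt : b + t ≠ 0 := by positivity
      have htm : t^μ = t^(μ-1) * t := by
        rw [← Real.rpow_add_one ht0.ne' (μ-1)]; ring_nf
      rw [htm]
      field_simp
      ring
    have hint : IntegrableOn (fun t : ℝ => t^μ * ((a+t)⁻¹ * (b+t)⁻¹)) (Ioi 0) := by
      refine (integrable_congr ?_).mpr ((hone_a.1.const_mul (a/(a-b))).sub
        (hone_b.1.const_mul (b/(a-b))))
      filter_upwards [ae_restrict_mem measurableSet_Ioi] with t ht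
      exact hFeq t ht
    refine ⟨hint, ?_⟩
    rw [setIntegral_congr_ae measurableSet_Ioi
        (Filter.Eventually.of_forall (fun t ht => hFeq t ht)),
      integral_sub (hone_a.1.const_mul _) (hone_b.1.const_mul _),
      MeasureTheory.integral_const_mul, MeasureTheory.integral_const_mul, hone_a.2, hone_b.2, if_neg hab]
    have haa : a^(μ-1) * a = a^μ := by
      rw [← Real.rpow_add_one ha.ne' (μ-1)]; ring_nf
    have hbb : b^(μ-1) * b = b^μ := by
      rw [← Real.rpow_add_one hb.ne' (μ-1)]; ring_nf
    have hsin : Real.sin (π*μ) ≠ 0 :=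
      ne_of_gt (Real.sin_pos_of_pos_of_lt_pi (by positivity)
        (by nlinarith [Real.pi_pos]))
    rw [← haa, ← hbb]
    field_simp

end StmtAux
end aux

open MeasureTheory Set Real StmtAux in
theorem stmt1 {n : Type*} [Fintype n] [DecidableEq n]
    (B A : Matrix n n ℂ) (b : n → ℝ) (v : n → (n → ℂ))
    (hb : ∀ i, 0 < b i)
    (hortho : ∀ i j, star (v i) ⬝ᵥ v j = if i = j then 1 else 0)
    (hB : B = ∑ i, (b i : ℂ) • Matrix.vecMulVec (v i) (star (v i)))
    (μ : ℝ) (hμ : μ ∈ Set.Ioo (0 : ℝ) 1) :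
    (∫ t in Set.Ioi (0 : ℝ), t ^ μ • ((B + t • 1)⁻¹ * A * (B + t • 1)⁻¹)) =
      (Real.pi / Real.sin (Real.pi * μ)) •
        ∑ i, ∑ j,
          (((if b i = b j then μ * b i ^ (μ - 1) else (b i ^ μ - b j ^ μ) / (b i - b j)) : ℝ) : ℂ) •
            (Matrix.vecMulVec (v i) (star (v i)) * A * Matrix.vecMulVec (v j) (star (v j))) := by
  obtain ⟨hμ0, hμ1⟩ := hμ
  set P : n → Matrix n n ℂ := fun i => Matrix.vecMulVec (v i) (star (v i)) with hPdef
  set M : n → n → Matrix n n ℂ := fun i j => P i * A * P j with hMdef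
  set q : n → n → ℝ := fun i j =>
    if b i = b j then μ * b i ^ (μ - 1) else (b i ^ μ - b j ^ μ) / (b i - b j) with hqdef
  set g : n → n → ℝ → ℝ := fun i j t => t^μ * ((b i + t)⁻¹ * (b j + t)⁻¹) with hgdef
  -- pointwise decomposition of the integrand
  have hcong : ∀ t ∈ Ioi (0:ℝ),
      t ^ μ • ((B + t • 1)⁻¹ * A * (B + t • 1)⁻¹)
        = ∑ i, ∑ j, ((g i j t : ℝ) : ℂ) • M i j := by
    intro t ht
    rw [spectral_inv B b v hb hortho hB ht, Finset.sum_mul, Finset.sum_mul, Finset.smul_sum]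
    refine Finset.sum_congr rfl fun i _ => ?_
    rw [Finset.mul_sum, Finset.smul_sum]
    refine Finset.sum_congr rfl fun j _ => ?_
    simp only [smul_mul_assoc, mul_smul_comm, Matrix.mul_assoc, hMdef, hgdef]
    rw [smul_smul, ← algebraMap_smul ℂ (t^μ), smul_smul]
    congr 1
    simp only [Complex.coe_algebraMap]
    push_cast
    ring
  -- integrability of each piece
  have hInt : ∀ i j, @Integrable (Matrix n n ℂ) PseudoMetricSpace.toUniformSpace.toTopologicalSpace
      SeminormedAddGroup.toContinuousENorm ℝ _ (fun t => ((g i j t : ℝ) : ℂ) • M i j)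
      (volume.restrict (Ioi (0:ℝ))) := by
    intro i j
    exact ((int_main (hb i) (hb j) hμ0 hμ1).1.ofReal (𝕜 := ℂ)).smul_const (M i j)
  calc (∫ t in Set.Ioi (0 : ℝ), t ^ μ • ((B + t • 1)⁻¹ * A * (B + t • 1)⁻¹))
      = ∫ t in Ioi (0:ℝ), ∑ i, ∑ j, ((g i j t : ℝ) : ℂ) • M i j := by
        exact setIntegral_congr_ae measurableSet_Ioi
          (Filter.Eventually.of_forall (fun t ht => hcong t ht))
    _ = ∑ i, ∑ j, ∫ t in Ioi (0:ℝ), ((g i j t : ℝ) : ℂ) • M i j := by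
        rw [integral_finset_sum _ (fun i _ => integrable_finset_sum _ (fun j _ => hInt i j))]
        exact Finset.sum_congr rfl fun i _ => integral_finset_sum _ (fun j _ => hInt i j)
    _ = ∑ i, ∑ j, ((π / Real.sin (π*μ) * q i j : ℝ) : ℂ) • M i j := by
        refine Finset.sum_congr rfl fun i _ => Finset.sum_congr rfl fun j _ => ?_
        rw [integral_smul_const]
        congr 1
        have h1 : ∫ t in Ioi (0:ℝ), ((g i j t : ℝ) : ℂ)
            = ((∫ t in Ioi (0:ℝ), g i j t : ℝ) : ℂ) := integral_ofReal
        rw [h1, (int_main (hb i) (hb j) hμ0 hμ1).2]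
    _ = (Real.pi / Real.sin (Real.pi * μ)) • ∑ i, ∑ j, ((q i j : ℝ) : ℂ) • M i j := by
        rw [Finset.smul_sum]
        refine Finset.sum_congr rfl fun i _ => ?_
        rw [Finset.smul_sum]
        refine Finset.sum_congr rfl fun j _ => ?_
        rw [Complex.ofReal_mul, mul_smul, ← Complex.coe_algebraMap,
          algebraMap_smul]
end

section
/- For a positive definite matrix Ξ(x) depending differentiably on a real parameter x, and β ∈ (0,1), the derivative of Tr(Ξ(x)^β) equals Tr(β·Ξ(x)^(β−1)·Ξ'(x)). -/
open scoped Kronecker Matrix ComplexOrder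

attribute [local instance] Matrix.frobeniusNormedAddCommGroup Matrix.frobeniusNormedSpace

namespace Stmt3Aux

open Matrix Complex Finset

variable {n : Type*} [Fintype n] [DecidableEq n]

omit [DecidableEq n] in
lemma frob_sq_eq (M : Matrix n n ℂ) : ‖M‖ ^ 2 = ∑ i, ∑ j, ‖M i j‖ ^ 2 := by
  rw [Matrix.frobenius_norm_def, ← Real.rpow_natCast _ 2, ← Real.rpow_mul (by positivity)]
  norm_num

lemma trace_conj_pair (U V : Matrix n n ℂ) (d e : n → ℝ) :
    ((U * Matrix.diagonal (Complex.ofReal ∘ d) * star U) *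
      (V * Matrix.diagonal (Complex.ofReal ∘ e) * star V)).trace
      = ((∑ i, ∑ j, d i * e j * ‖(star U * V) i j‖ ^ 2 : ℝ) : ℂ) := by
  have h1 : (U * Matrix.diagonal (Complex.ofReal ∘ d) * star U) *
      (V * Matrix.diagonal (Complex.ofReal ∘ e) * star V)
      = U * (Matrix.diagonal (Complex.ofReal ∘ d) *
          ((star U * V) * (Matrix.diagonal (Complex.ofReal ∘ e) * star V))) := by
    noncomm_ring
  rw [h1, Matrix.trace_mul_comm]
  have h2 : Matrix.diagonal (Complex.ofReal ∘ d) *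
      (star U * V * (Matrix.diagonal (Complex.ofReal ∘ e) * star V)) * U
      = Matrix.diagonal (Complex.ofReal ∘ d) *
        ((star U * V) * Matrix.diagonal (Complex.ofReal ∘ e) * star (star U * V)) := by
    simp only [Matrix.star_mul, star_star]
    noncomm_ring
  rw [h2]
  set W := star U * V with hW
  have key : ∀ i j, (d i : ℂ) * (W i j * (e j : ℂ) * star (W i j))
      = ((d i * e j * ‖W i j‖ ^ 2 : ℝ) : ℂ) := by
    intro i j
    have hz : W i j * star (W i j) = ((‖W i j‖ ^ 2 : ℝ) : ℂ) := by
      rw [show star (W i j) = starRingEnd ℂ (W i j) from rfl, Complex.mul_conj,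
        Complex.normSq_eq_norm_sq]
    calc (d i : ℂ) * (W i j * (e j : ℂ) * star (W i j))
        = (d i : ℂ) * (e j : ℂ) * (W i j * star (W i j)) := by ring
      _ = _ := by rw [hz]; push_cast; ring
  calc (Matrix.diagonal (Complex.ofReal ∘ d) *
        (W * Matrix.diagonal (Complex.ofReal ∘ e) * star W)).trace
      = ∑ i, ∑ j, (d i : ℂ) * (W i j * (e j : ℂ) * star (W i j)) := by
        refine Finset.sum_congr rfl fun i _ => ?_
        show (Matrix.diagonal (Complex.ofReal ∘ d) *
          (W * Matrix.diagonal (Complex.ofReal ∘ e) * star W)) i i = _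
        rw [Matrix.diagonal_mul, Matrix.mul_apply, Finset.mul_sum]
        refine Finset.sum_congr rfl fun j _ => ?_
        rw [Matrix.mul_diagonal, Matrix.star_apply]
        rfl
    _ = _ := by simp only [key]; norm_cast

lemma re_trace_conj_pair (U V : Matrix n n ℂ) (d e : n → ℝ) :
    (((U * Matrix.diagonal (Complex.ofReal ∘ d) * star U) *
      (V * Matrix.diagonal (Complex.ofReal ∘ e) * star V)).trace).re
      = ∑ i, ∑ j, d i * e j * ‖(star U * V) i j‖ ^ 2 := by
  rw [trace_conj_pair]; exact Complex.ofReal_re _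

lemma trace_conj_single (V : Matrix n n ℂ) (hV : star V * V = 1) (d : n → ℝ) :
    ((V * Matrix.diagonal (Complex.ofReal ∘ d) * star V)).trace
      = ((∑ j, d j : ℝ) : ℂ) := by
  rw [Matrix.trace_mul_cycle, hV, Matrix.one_mul, Matrix.trace_diagonal]
  simp

lemma row_sums {W : Matrix n n ℂ} (hW : W * star W = 1) (i : n) :
    ∑ j, ‖W i j‖ ^ 2 = 1 := by
  have h := congrArg (fun M : Matrix n n ℂ => (M i i).re) hW
  simp only [Matrix.mul_apply, Matrix.star_apply, Matrix.one_apply_eq, Complex.star_def,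
    Complex.mul_conj, Complex.re_sum, Complex.ofReal_re, Complex.normSq_eq_norm_sq, Complex.one_re] at h
  exact h

lemma col_sums {W : Matrix n n ℂ} (hW : star W * W = 1) (j : n) :
    ∑ i, ‖W i j‖ ^ 2 = 1 := by
  have h := congrArg (fun M : Matrix n n ℂ => (M j j).re) hW
  simp only [Matrix.mul_apply, Matrix.star_apply, Complex.star_def, mul_comm,
    Complex.mul_conj, Matrix.one_apply_eq, Complex.re_sum, Complex.ofReal_re,
    Complex.normSq_eq_norm_sq, Complex.one_re] at h
  exact h


lemma cfc_conj (A : Matrix n n ℂ) (hA : A.IsHermitian) (f : ℝ → ℝ) :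
    cfc f A = (hA.eigenvectorUnitary : Matrix n n ℂ) *
      Matrix.diagonal (Complex.ofReal ∘ f ∘ hA.eigenvalues) *
      star (hA.eigenvectorUnitary : Matrix n n ℂ) := by
  rw [hA.cfc_eq]; rfl

lemma sqrt_helper {S C : ℝ} (hS : 0 ≤ S) (hC : 0 ≤ C) (h : S ^ 2 ≤ C ^ 2) : S ≤ C := by
  calc S = Real.sqrt (S ^ 2) := (Real.sqrt_sq hS).symm
    _ ≤ Real.sqrt (C ^ 2) := Real.sqrt_le_sqrt h
    _ = C := Real.sqrt_sq hC

omit [DecidableEq n] in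
lemma retrace_mul_le (P M : Matrix n n ℂ) : |((P * M).trace).re| ≤ ‖P‖ * ‖M‖ := by
  have habs : |((P * M).trace).re| ≤ ∑ i, ∑ k, ‖P i k‖ * ‖M k i‖ := by
    refine le_trans (Complex.abs_re_le_norm _) ?_
    simp only [Matrix.trace, Matrix.diag_apply, Matrix.mul_apply]
    refine le_trans (norm_sum_le _ _) (Finset.sum_le_sum fun i _ => ?_)
    refine le_trans (norm_sum_le _ _) (Finset.sum_le_sum fun k _ => ?_)
    rw [norm_mul]
  refine le_trans habs ?_
  have e0 : ∑ i, ∑ k, ‖P i k‖ * ‖M k i‖ = ∑ p : n × n, ‖P p.1 p.2‖ * ‖M p.2 p.1‖ := by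
    rw [Fintype.sum_prod_type]
  have e1 : ∑ p : n × n, ‖P p.1 p.2‖ ^ 2 = ‖P‖ ^ 2 := by
    rw [frob_sq_eq, Fintype.sum_prod_type]
  have e2 : ∑ p : n × n, ‖M p.2 p.1‖ ^ 2 = ‖M‖ ^ 2 := by
    rw [frob_sq_eq, Fintype.sum_prod_type]
    exact Finset.sum_comm
  have h1 := Finset.sum_mul_sq_le_sq_mul_sq (univ : Finset (n × n))
    (fun p => ‖P p.1 p.2‖) (fun p => ‖M p.2 p.1‖)
  rw [e1, e2] at h1
  rw [e0]
  refine sqrt_helper (Finset.sum_nonneg fun p _ => by positivity) (by positivity) ?_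
  calc (∑ p : n × n, ‖P p.1 p.2‖ * ‖M p.2 p.1‖) ^ 2 ≤ ‖P‖ ^ 2 * ‖M‖ ^ 2 := h1
    _ = (‖P‖ * ‖M‖) ^ 2 := by ring

omit [DecidableEq n] in
lemma re_dot_self (v : n → ℂ) : (dotProduct (star v) v).re = ∑ i, ‖v i‖ ^ 2 := by
  simp only [dotProduct, Pi.star_apply, Complex.star_def, Complex.re_sum, mul_comm,
    Complex.mul_conj, Complex.ofReal_re, Complex.normSq_eq_norm_sq]

omit [DecidableEq n] in
lemma quad_abs (M : Matrix n n ℂ) (v : n → ℂ) :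
    |(dotProduct (star v) (M *ᵥ v)).re| ≤ ‖M‖ * ∑ i, ‖v i‖ ^ 2 := by
  have habs : |(dotProduct (star v) (M *ᵥ v)).re|
      ≤ ∑ i, ∑ j, ‖v i‖ * ‖M i j‖ * ‖v j‖ := by
    refine le_trans (Complex.abs_re_le_norm _) ?_
    simp only [dotProduct, Pi.star_apply, Matrix.mulVec, dotProduct]
    refine le_trans (norm_sum_le _ _) (Finset.sum_le_sum fun i _ => ?_)
    rw [norm_mul, norm_star]
    refine le_trans (mul_le_mul_of_nonneg_left (norm_sum_le _ _) (norm_nonneg _)) ?_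
    rw [Finset.mul_sum]
    refine le_of_eq (Finset.sum_congr rfl fun j _ => ?_)
    rw [norm_mul]; ring
  refine le_trans habs ?_
  have e0 : ∑ i, ∑ j, ‖v i‖ * ‖M i j‖ * ‖v j‖
      = ∑ p : n × n, (‖v p.1‖ * ‖v p.2‖) * ‖M p.1 p.2‖ := by
    rw [Fintype.sum_prod_type]
    exact Finset.sum_congr rfl fun i _ => Finset.sum_congr rfl fun j _ => by ring

  have e1 : ∑ p : n × n, (‖v p.1‖ * ‖v p.2‖) ^ 2 = (∑ i, ‖v i‖ ^ 2) ^ 2 := by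
    rw [Fintype.sum_prod_type]
    rw [sq (∑ i, ‖v i‖ ^ 2), Finset.sum_mul_sum]
    exact Finset.sum_congr rfl fun i _ => Finset.sum_congr rfl fun j _ => by ring
  have e2 : ∑ p : n × n, ‖M p.1 p.2‖ ^ 2 = ‖M‖ ^ 2 := by
    rw [frob_sq_eq, Fintype.sum_prod_type]
  have h1 := Finset.sum_mul_sq_le_sq_mul_sq (univ : Finset (n × n))
    (fun p => ‖v p.1‖ * ‖v p.2‖) (fun p => ‖M p.1 p.2‖)
  rw [e1, e2] at h1
  rw [e0]
  refine sqrt_helper (Finset.sum_nonneg fun p _ => by positivity) (by positivity) ?_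
  calc (∑ p : n × n, (‖v p.1‖ * ‖v p.2‖) * ‖M p.1 p.2‖) ^ 2
      ≤ (∑ i, ‖v i‖ ^ 2) ^ 2 * ‖M‖ ^ 2 := h1
    _ = (‖M‖ * ∑ i, ‖v i‖ ^ 2) ^ 2 := by ring


lemma quad_range {A : Matrix n n ℂ} (hA : A.IsHermitian) (lo hi : ℝ)
    (hlo : ∀ i, lo ≤ hA.eigenvalues i) (hhi : ∀ i, hA.eigenvalues i ≤ hi) (v : n → ℂ) :
    lo * (∑ i, ‖v i‖ ^ 2) ≤ (dotProduct (star v) (A *ᵥ v)).re ∧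
      (dotProduct (star v) (A *ᵥ v)).re ≤ hi * (∑ i, ‖v i‖ ^ 2) := by
  set U := (hA.eigenvectorUnitary : Matrix n n ℂ) with hUdef
  have hU1 : U * star U = 1 := Matrix.mem_unitaryGroup_iff.mp hA.eigenvectorUnitary.2
  set w := star U *ᵥ v with hw
  have hsw : star w = star v ᵥ* U := by
    rw [hw, Matrix.star_mulVec, Matrix.star_eq_conjTranspose, Matrix.conjTranspose_conjTranspose]
  have h1 : dotProduct (star v) (A *ᵥ v)
      = dotProduct (star w) (Matrix.diagonal (Complex.ofReal ∘ hA.eigenvalues) *ᵥ w) := by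
    conv_lhs => rw [show A = U * Matrix.diagonal (Complex.ofReal ∘ hA.eigenvalues) * star U from
      hA.spectral_theorem]
    rw [← Matrix.mulVec_mulVec, ← Matrix.mulVec_mulVec, dotProduct_mulVec (star v) U _,
      ← hsw, ← hw]
  have h2 : (dotProduct (star v) (A *ᵥ v)).re = ∑ k, hA.eigenvalues k * ‖w k‖ ^ 2 := by
    rw [h1]
    simp only [dotProduct, Matrix.mulVec_diagonal, Pi.star_apply, Complex.star_def,
      Complex.re_sum, Function.comp_apply]
    refine Finset.sum_congr rfl fun k _ => ?_
    rw [show (starRingEnd ℂ) (w k) * ((hA.eigenvalues k : ℂ) * w k)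
        = (hA.eigenvalues k : ℂ) * (w k * (starRingEnd ℂ) (w k)) by ring, Complex.mul_conj,
      ← Complex.ofReal_mul, Complex.ofReal_re, Complex.normSq_eq_norm_sq]
  have h3 : ∑ k, ‖w k‖ ^ 2 = ∑ i, ‖v i‖ ^ 2 := by
    have hdp : dotProduct (star w) w = dotProduct (star v) v := by
      rw [hsw, ← dotProduct_mulVec, hw, Matrix.mulVec_mulVec, hU1, Matrix.one_mulVec]
    have := congrArg Complex.re hdp
    rwa [re_dot_self, re_dot_self] at this
  rw [h2, ← h3]
  constructor
  · rw [Finset.mul_sum]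
    exact Finset.sum_le_sum fun k _ => mul_le_mul_of_nonneg_right (hlo k) (by positivity)
  · rw [Finset.mul_sum]
    exact Finset.sum_le_sum fun k _ => mul_le_mul_of_nonneg_right (hhi k) (by positivity)

lemma eig_bound {A B : Matrix n n ℂ} (hA : A.IsHermitian) (hB : B.IsHermitian) (lo hi : ℝ)
    (hlo : ∀ i, lo ≤ hA.eigenvalues i) (hhi : ∀ i, hA.eigenvalues i ≤ hi) (j : n) :
    lo - ‖B - A‖ ≤ hB.eigenvalues j ∧ hB.eigenvalues j ≤ hi + ‖B - A‖ := by
  set v : n → ℂ := ⇑(hB.eigenvectorBasis j) with hv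
  have hv1 : ∑ i, ‖v i‖ ^ 2 = 1 := by
    have hnorm : ‖hB.eigenvectorBasis j‖ = 1 := hB.eigenvectorBasis.orthonormal.1 j
    have hnn : (0:ℝ) ≤ ∑ i, ‖v i‖ ^ 2 := Finset.sum_nonneg fun i _ => sq_nonneg _
    have hsqrt : Real.sqrt (∑ i, ‖v i‖ ^ 2) = 1 := by
      rw [← EuclideanSpace.norm_eq]; exact hnorm
    have h2 := congrArg (fun t : ℝ => t ^ 2) hsqrt
    simp only [Real.sq_sqrt hnn] at h2
    simpa using h2
  have hmu : hB.eigenvalues j = (dotProduct (star v) (B *ᵥ v)).re := by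
    simpa using hB.eigenvalues_eq j
  have hsplit : (dotProduct (star v) (B *ᵥ v)).re
      = (dotProduct (star v) (A *ᵥ v)).re
        + (dotProduct (star v) ((B - A) *ᵥ v)).re := by
    rw [Matrix.sub_mulVec, dotProduct_sub, Complex.sub_re]; ring
  have hq := quad_abs (B - A) v
  rw [hv1, mul_one] at hq
  obtain ⟨hq1, hq2⟩ := abs_le.mp hq
  have hr := quad_range hA lo hi hlo hhi v
  rw [hv1, mul_one, mul_one] at hr
  constructor <;> [linarith [hr.1]; linarith [hr.2]]

lemma taylor_bound {β : ℝ} (hβ0 : 0 < β) (hβ1 : β < 1) {δ : ℝ} (hδ : 0 < δ)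
    {a b : ℝ} (ha : δ ≤ a) (hb : δ ≤ b) :
    |b ^ β - a ^ β - β * a ^ (β - 1) * (b - a)|
      ≤ (β * (1 - β) * δ ^ (β - 2)) * (b - a) ^ 2 := by
  set L := β * (1 - β) * δ ^ (β - 2) with hL
  have hL0 : 0 ≤ L :=
    mul_nonneg (mul_nonneg hβ0.le (by linarith)) (Real.rpow_nonneg hδ.le _)
  have hg : ∀ s t : ℝ, δ ≤ s → δ ≤ t → |β * t ^ (β - 1) - β * s ^ (β - 1)| ≤ L * |t - s| := by
    intro s t hs ht
    have hder : ∀ u ∈ Set.Ici δ, HasDerivWithinAt (fun u : ℝ => β * u ^ (β - 1))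
        (β * ((β - 1) * u ^ (β - 2))) (Set.Ici δ) u := by
      intro u hu
      have hu0 : u ≠ 0 := (lt_of_lt_of_le hδ hu).ne'
      have h := (Real.hasDerivAt_rpow_const (x := u) (p := β - 1) (Or.inl hu0)).const_mul β
      rw [show β - 1 - 1 = β - 2 by ring] at h
      exact h.hasDerivWithinAt
    have hbound : ∀ u ∈ Set.Ici δ, ‖β * ((β - 1) * u ^ (β - 2))‖ ≤ L := by
      intro u hu
      have hu' : δ ≤ u := hu
      have h1 : u ^ (β - 2) ≤ δ ^ (β - 2) :=
        Real.rpow_le_rpow_of_nonpos hδ hu' (by linarith)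
      have h2 : (0:ℝ) ≤ u ^ (β - 2) := Real.rpow_nonneg (by linarith) _
      rw [Real.norm_eq_abs, abs_mul, abs_mul, _root_.abs_of_pos hβ0,
        _root_.abs_of_neg (by linarith : β - 1 < 0), _root_.abs_of_nonneg h2]
      calc β * (-(β - 1) * u ^ (β - 2)) = (β * (1 - β)) * u ^ (β - 2) := by ring
        _ ≤ (β * (1 - β)) * δ ^ (β - 2) :=
            mul_le_mul_of_nonneg_left h1 (mul_nonneg hβ0.le (by linarith))
        _ = L := by rw [hL]
    have := (convex_Ici δ).norm_image_sub_le_of_norm_hasDerivWithin_le hder hbound hs ht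
    simpa [Real.norm_eq_abs] using this
  have hderiv2 : ∀ t ∈ Set.uIcc a b, HasDerivWithinAt
      (fun t : ℝ => t ^ β - β * a ^ (β - 1) * t)
      (β * t ^ (β - 1) - β * a ^ (β - 1)) (Set.uIcc a b) t := by
    intro t ht
    have htδ : δ ≤ t := le_trans (le_min ha hb) ht.1
    have ht0 : t ≠ 0 := (lt_of_lt_of_le hδ htδ).ne'
    have h1 := Real.hasDerivAt_rpow_const (x := t) (p := β) (Or.inl ht0)
    have h2 := (hasDerivAt_id t).const_mul (β * a ^ (β - 1))
    have h3 := h1.sub h2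
    rw [mul_one] at h3
    exact h3.hasDerivWithinAt
  have hbound2 : ∀ t ∈ Set.uIcc a b, ‖β * t ^ (β - 1) - β * a ^ (β - 1)‖ ≤ L * |b - a| := by
    intro t ht
    have htδ : δ ≤ t := le_trans (le_min ha hb) ht.1
    have hta : |t - a| ≤ |b - a| := by
      rcases le_total a b with hab | hab
      · rw [Set.uIcc_of_le hab] at ht
        rw [_root_.abs_of_nonneg (by linarith [ht.1] : (0:ℝ) ≤ t - a),
          _root_.abs_of_nonneg (by linarith : (0:ℝ) ≤ b - a)]
        linarith [ht.2]
      · rw [Set.uIcc_of_ge hab] at ht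
        rw [_root_.abs_of_nonpos (by linarith [ht.2] : t - a ≤ 0),
          _root_.abs_of_nonpos (by linarith : b - a ≤ 0)]
        linarith [ht.1]
    rw [Real.norm_eq_abs]
    calc |β * t ^ (β - 1) - β * a ^ (β - 1)| ≤ L * |t - a| := hg a t ha htδ
      _ ≤ L * |b - a| := mul_le_mul_of_nonneg_left hta hL0
  have hmain := (convex_uIcc a b).norm_image_sub_le_of_norm_hasDerivWithin_le hderiv2 hbound2
    Set.left_mem_uIcc Set.right_mem_uIcc
  rw [Real.norm_eq_abs, Real.norm_eq_abs] at hmain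
  calc |b ^ β - a ^ β - β * a ^ (β - 1) * (b - a)|
      = |(b ^ β - β * a ^ (β - 1) * b) - (a ^ β - β * a ^ (β - 1) * a)| := by ring_nf
    _ ≤ L * |b - a| * |b - a| := hmain
    _ = L * (b - a) ^ 2 := by rw [mul_assoc, abs_mul_abs_self]; ring


omit [DecidableEq n] in
lemma frob_sq_trace (M : Matrix n n ℂ) : ‖M‖ ^ 2 = ((Mᴴ * M).trace).re := by
  rw [frob_sq_eq]
  simp only [Matrix.trace, Matrix.diag_apply, Matrix.mul_apply, Matrix.conjTranspose_apply,
    Complex.re_sum, Complex.star_def]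
  rw [Finset.sum_comm]
  refine Finset.sum_congr rfl fun i _ => Finset.sum_congr rfl fun j _ => ?_
  rw [show (starRingEnd ℂ) (M j i) * M j i = M j i * (starRingEnd ℂ) (M j i) by ring,
    Complex.mul_conj, Complex.ofReal_re, Complex.normSq_eq_norm_sq]

lemma key_ineq (f g : ℝ → ℝ) (L : ℝ) (A B : Matrix n n ℂ)
    (hA : A.IsHermitian) (hB : B.IsHermitian)
    (hT : ∀ i j, |f (hB.eigenvalues j) - f (hA.eigenvalues i)
        - g (hA.eigenvalues i) * (hB.eigenvalues j - hA.eigenvalues i)|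
        ≤ L * (hB.eigenvalues j - hA.eigenvalues i) ^ 2) :
    |((cfc f B).trace).re - ((cfc f A).trace).re - ((cfc g A * (B - A)).trace).re|
      ≤ L * ‖B - A‖ ^ 2 := by
  classical
  set U := (hA.eigenvectorUnitary : Matrix n n ℂ) with hUdef
  set V := (hB.eigenvectorUnitary : Matrix n n ℂ) with hVdef
  set lam := hA.eigenvalues with hlamdef
  set mu := hB.eigenvalues with hmudef
  set W := star U * V with hWdef
  set q : n → n → ℝ := fun i j => ‖W i j‖ ^ 2 with hqdef
  have hU1 : U * star U = 1 := Matrix.mem_unitaryGroup_iff.mp hA.eigenvectorUnitary.2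
  have hU2 : star U * U = 1 := Matrix.mem_unitaryGroup_iff'.mp hA.eigenvectorUnitary.2
  have hV1 : V * star V = 1 := Matrix.mem_unitaryGroup_iff.mp hB.eigenvectorUnitary.2
  have hV2 : star V * V = 1 := Matrix.mem_unitaryGroup_iff'.mp hB.eigenvectorUnitary.2
  have hWs : star W = star V * U := by rw [hWdef, Matrix.star_mul, star_star]
  have hW1 : W * star W = 1 := by
    rw [hWs, hWdef, show star U * V * (star V * U) = star U * (V * star V) * U by noncomm_ring,
      hV1, Matrix.mul_one, hU2]
  have hW2 : star W * W = 1 := by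
    rw [hWs, hWdef, show star V * U * (star U * V) = star V * (U * star U) * V by noncomm_ring,
      hU1, Matrix.mul_one, hV2]
  have hrow : ∀ i, ∑ j, q i j = 1 := row_sums hW1
  have hcol : ∀ j, ∑ i, q i j = 1 := col_sums hW2
  have hq0 : ∀ i j, 0 ≤ q i j := fun i j => sq_nonneg _
  have hAeq : A = U * Matrix.diagonal (Complex.ofReal ∘ lam) * star U := by
    rw [hUdef, hlamdef]; exact hA.spectral_theorem
  have hBeq : B = V * Matrix.diagonal (Complex.ofReal ∘ mu) * star V := by
    rw [hVdef, hmudef]; exact hB.spectral_theorem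
  -- helper for Kronecker-delta sums
  have hdelta : ∀ (c : n → n → ℝ) (i : n),
      ∑ j, c i j * ‖(1 : Matrix n n ℂ) i j‖ ^ 2 = c i i := by
    intro c i
    rw [Finset.sum_eq_single i]
    · simp [Matrix.one_apply_eq]
    · intro j _ hj
      simp [Matrix.one_apply_ne (Ne.symm hj)]
    · intro h; exact absurd (Finset.mem_univ i) h
  -- trace identities
  have e1 : ((cfc f B).trace).re = ∑ i, ∑ j, q i j * f (mu j) := by
    rw [cfc_conj B hB f, trace_conj_single V hV2 (f ∘ mu), Complex.ofReal_re, Finset.sum_comm]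
    refine Finset.sum_congr rfl fun j _ => ?_
    rw [← Finset.sum_mul, hcol j, one_mul, Function.comp_apply]
  have e2 : ((cfc f A).trace).re = ∑ i, ∑ j, q i j * f (lam i) := by
    rw [cfc_conj A hA f, trace_conj_single U hU2 (f ∘ lam), Complex.ofReal_re]
    refine Finset.sum_congr rfl fun i _ => ?_
    rw [← Finset.sum_mul, hrow i, one_mul, Function.comp_apply]
  have e3 : ((cfc g A * B).trace).re = ∑ i, ∑ j, q i j * (g (lam i) * mu j) := by
    rw [cfc_conj A hA g]
    conv_lhs => rw [hBeq]
    rw [re_trace_conj_pair U V (g ∘ lam) mu]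
    exact Finset.sum_congr rfl fun i _ => Finset.sum_congr rfl fun j _ => by
      rw [Function.comp_apply]; ring
  have e4 : ((cfc g A * A).trace).re = ∑ i, ∑ j, q i j * (g (lam i) * lam i) := by
    have hGA : cfc g A * A = (U * Matrix.diagonal (Complex.ofReal ∘ (g ∘ lam)) * star U) *
        (U * Matrix.diagonal (Complex.ofReal ∘ lam) * star U) := by
      rw [← hAeq, ← cfc_conj A hA g]
    rw [hGA, re_trace_conj_pair U U (g ∘ lam) lam, hU2]
    refine Finset.sum_congr rfl fun i _ => ?_
    simp only [Function.comp_apply]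
    rw [hdelta (fun i j => g (lam i) * lam j) i, ← Finset.sum_mul, hrow i, one_mul]
  have e5 : ‖B - A‖ ^ 2 = ∑ i, ∑ j, q i j * (mu j - lam i) ^ 2 := by
    have hherm : (B - A)ᴴ = B - A := hB.sub hA
    have hexp : (B - A) * (B - A) = B * B - B * A - A * B + A * A := by noncomm_ring
    have eBB : ((B * B).trace).re = ∑ i, ∑ j, q i j * mu j ^ 2 := by
      have h : B * B = (V * Matrix.diagonal (Complex.ofReal ∘ mu) * star V) *
          (V * Matrix.diagonal (Complex.ofReal ∘ mu) * star V) := by rw [← hBeq]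
      rw [h, re_trace_conj_pair V V mu mu, hV2]
      calc ∑ a, ∑ b, mu a * mu b * ‖(1 : Matrix n n ℂ) a b‖ ^ 2
          = ∑ a, mu a * mu a :=
            Finset.sum_congr rfl fun a _ => hdelta (fun a b => mu a * mu b) a
        _ = ∑ j, ∑ i, q i j * mu j ^ 2 := by
            refine Finset.sum_congr rfl fun j _ => ?_
            rw [← Finset.sum_mul, hcol j, one_mul, sq]
        _ = ∑ i, ∑ j, q i j * mu j ^ 2 := Finset.sum_comm
    have eAA : ((A * A).trace).re = ∑ i, ∑ j, q i j * lam i ^ 2 := by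
      have h : A * A = (U * Matrix.diagonal (Complex.ofReal ∘ lam) * star U) *
          (U * Matrix.diagonal (Complex.ofReal ∘ lam) * star U) := by rw [← hAeq]
      rw [h, re_trace_conj_pair U U lam lam, hU2]
      refine Finset.sum_congr rfl fun i _ => ?_
      rw [hdelta (fun i i' => lam i * lam i') i, ← Finset.sum_mul, hrow i, one_mul, sq]
    have eAB : ((A * B).trace).re = ∑ i, ∑ j, q i j * (lam i * mu j) := by
      have h : A * B = (U * Matrix.diagonal (Complex.ofReal ∘ lam) * star U) *
          (V * Matrix.diagonal (Complex.ofReal ∘ mu) * star V) := by rw [← hAeq, ← hBeq]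
      rw [h, re_trace_conj_pair U V lam mu, ← hWdef]
      exact Finset.sum_congr rfl fun i _ => Finset.sum_congr rfl fun j _ => by
        rw [hqdef]; ring
    have eBA : ((B * A).trace).re = ∑ i, ∑ j, q i j * (lam i * mu j) := by
      have h : B * A = (V * Matrix.diagonal (Complex.ofReal ∘ mu) * star V) *
          (U * Matrix.diagonal (Complex.ofReal ∘ lam) * star U) := by rw [← hAeq, ← hBeq]
      rw [h, re_trace_conj_pair V U mu lam, ← hWs, Finset.sum_comm]
      refine Finset.sum_congr rfl fun i _ => Finset.sum_congr rfl fun j _ => ?_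
      rw [hqdef, Matrix.star_apply, norm_star]
      ring
    have hsplit : ((B - A)ᴴ * (B - A)).trace.re
        = ((B * B).trace).re - ((B * A).trace).re - ((A * B).trace).re + ((A * A).trace).re := by
      rw [hherm, hexp]
      rw [Matrix.trace_add, Matrix.trace_sub, Matrix.trace_sub, Complex.add_re, Complex.sub_re,
        Complex.sub_re]
    rw [frob_sq_trace, hsplit, eBB, eAA, eAB, eBA]
    simp only [← Finset.sum_sub_distrib, ← Finset.sum_add_distrib]
    exact Finset.sum_congr rfl fun i _ => Finset.sum_congr rfl fun j _ => by ring
  have esub : ((cfc g A * (B - A)).trace).re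
      = ((cfc g A * B).trace).re - ((cfc g A * A).trace).re := by
    rw [Matrix.mul_sub, Matrix.trace_sub, Complex.sub_re]
  have etot : ((cfc f B).trace).re - ((cfc f A).trace).re - ((cfc g A * (B - A)).trace).re
      = ∑ i, ∑ j, q i j * (f (mu j) - f (lam i) - g (lam i) * (mu j - lam i)) := by
    rw [e1, e2, esub, e3, e4]
    simp only [← Finset.sum_sub_distrib, ← Finset.sum_add_distrib]
    exact Finset.sum_congr rfl fun i _ => Finset.sum_congr rfl fun j _ => by ring
  rw [etot, e5, Finset.mul_sum]
  refine le_trans (Finset.abs_sum_le_sum_abs _ _) (Finset.sum_le_sum fun i _ => ?_)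
  rw [Finset.mul_sum]
  refine le_trans (Finset.abs_sum_le_sum_abs _ _) (Finset.sum_le_sum fun j _ => ?_)
  rw [abs_mul, _root_.abs_of_nonneg (hq0 i j)]
  calc q i j * |f (mu j) - f (lam i) - g (lam i) * (mu j - lam i)|
      ≤ q i j * (L * (mu j - lam i) ^ 2) := mul_le_mul_of_nonneg_left (hT i j) (hq0 i j)
    _ = L * (q i j * (mu j - lam i) ^ 2) := by ring

end Stmt3Aux

open Stmt3Aux in

theorem stmt3 {n : Type*} [Fintype n] [DecidableEq n]
    (Ξ : ℝ → Matrix n n ℂ) (Ξ' : Matrix n n ℂ) (x : ℝ)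
    (hpos : ∀ y, (Ξ y).PosDef) (hder : HasDerivAt Ξ Ξ' x)
    (β : ℝ) (hβ : β ∈ Set.Ioo (0 : ℝ) 1) :
    HasDerivAt (fun y : ℝ => ((cfc (fun r : ℝ => r ^ β) (Ξ y)).trace).re)
      (((β • (mpow (Ξ x) (β - 1) * Ξ')).trace).re) x := by
  classical
  rcases isEmpty_or_nonempty n with hempty | hne
  · simp only [Matrix.trace, Finset.univ_eq_empty, Finset.sum_empty, Complex.zero_re]
    exact hasDerivAt_const x 0
  obtain ⟨hβ0, hβ1⟩ := hβ
  set A := Ξ x with hAdef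
  have hA : A.IsHermitian := (hpos x).1
  set lam := hA.eigenvalues with hlam
  set m := Finset.univ.inf' Finset.univ_nonempty lam with hm
  set Mx := Finset.univ.sup' Finset.univ_nonempty lam with hMx
  have hm0 : 0 < m := by
    rw [hm]
    rw [Finset.lt_inf'_iff]
    exact fun i _ => (hpos x).eigenvalues_pos i
  have hlo : ∀ i, m ≤ lam i := fun i => Finset.inf'_le _ (Finset.mem_univ i)
  have hhi : ∀ i, lam i ≤ Mx := fun i => Finset.le_sup' _ (Finset.mem_univ i)
  set δ := m / 2 with hδdef
  have hδ0 : 0 < δ := by positivity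
  set L := β * (1 - β) * δ ^ (β - 2) with hLdef
  set g : ℝ → ℝ := fun r => β * r ^ (β - 1) with hgdef
  set P := cfc g A with hPdef
  set T : Matrix n n ℂ → ℝ := fun M => ((P * M).trace).re with hTdef
  have hTsub : ∀ M N, T (M - N) = T M - T N := fun M N => by
    simp only [hTdef, Matrix.mul_sub, Matrix.trace_sub, Complex.sub_re]
  have hTadd : ∀ M N, T (M + N) = T M + T N := fun M N => by
    simp only [hTdef, Matrix.mul_add, Matrix.trace_add, Complex.add_re]
  have hTsmul : ∀ (r : ℝ) M, T (r • M) = r * T M := fun r M => by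
    simp only [hTdef, mul_smul_comm, Matrix.trace_smul, Complex.real_smul, Complex.mul_re,
      Complex.ofReal_re, Complex.ofReal_im]
    ring
  -- identification of the claimed derivative
  have hspec : ∀ r ∈ spectrum ℝ A, 0 < r := by
    rw [hA.spectrum_real_eq_range_eigenvalues]
    rintro r ⟨i, rfl⟩
    exact (hpos x).eigenvalues_pos i
  have hD : ((β • (mpow A (β - 1) * Ξ')).trace).re = T Ξ' := by
    have hc : cfc g A = β • mpow A (β - 1) := by
      rw [hgdef, mpow]
      exact cfc_const_mul β (fun r => r ^ (β - 1)) A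
        (fun r hr => (Real.continuousAt_rpow_const r _ (Or.inl (hspec r hr).ne')).continuousWithinAt)
    have hPE : P * Ξ' = β • (mpow A (β - 1) * Ξ') := by
      rw [hPdef, hc, smul_mul_assoc]
    show _ = ((P * Ξ').trace).re
    rw [hPE]
  -- eventual key bound
  have hcont : ContinuousAt Ξ x := hder.continuousAt
  have hev : ∀ᶠ y in nhds x, ‖Ξ y - A‖ ≤ δ := by
    have h2 := hcont (Metric.closedBall_mem_nhds (Ξ x) hδ0)
    filter_upwards [h2] with y hy
    rw [← hAdef] at hy
    simpa [Metric.mem_closedBall, dist_eq_norm] using hy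
  have hkey : ∀ᶠ y in nhds x,
      |((cfc (fun r : ℝ => r ^ β) (Ξ y)).trace).re
        - ((cfc (fun r : ℝ => r ^ β) A).trace).re - T (Ξ y - A)| ≤ L * ‖Ξ y - A‖ ^ 2 := by
    filter_upwards [hev] with y hy
    have hBh : (Ξ y).IsHermitian := (hpos y).1
    refine Stmt3Aux.key_ineq _ g L A (Ξ y) hA hBh ?_
    intro i j
    have heig := (Stmt3Aux.eig_bound hA hBh m Mx hlo hhi j).1
    have h1 : δ ≤ hBh.eigenvalues j := by linarith
    have h2 : δ ≤ lam i := le_trans (by linarith) (hlo i)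
    exact Stmt3Aux.taylor_bound hβ0 hβ1 hδ0 h2 h1
  -- asymptotics
  rw [hasDerivAt_iff_isLittleO, hD]
  have hrem := hasDerivAt_iff_isLittleO.mp hder
  have hΞO : (fun y => Ξ y - Ξ x) =O[nhds x] fun y => y - x := hder.isBigO_sub
  have hdecomp : (fun y => ((cfc (fun r : ℝ => r ^ β) (Ξ y)).trace).re
        - ((cfc (fun r : ℝ => r ^ β) A).trace).re - (y - x) • T Ξ')
      = fun y => (((cfc (fun r : ℝ => r ^ β) (Ξ y)).trace).re
          - ((cfc (fun r : ℝ => r ^ β) A).trace).re - T (Ξ y - A))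
        + T (Ξ y - Ξ x - (y - x) • Ξ') := by
    funext y
    have h1 : T (Ξ y - A) = T (Ξ y - Ξ x - (y - x) • Ξ') + (y - x) * T Ξ' := by
      rw [← hTsmul (y - x) Ξ', ← hTadd]
      congr 1
      rw [hAdef]
      abel
    rw [h1, smul_eq_mul]
    ring
  rw [hdecomp]
  have h_a : (fun y => T (Ξ y - Ξ x - (y - x) • Ξ')) =o[nhds x] fun y => y - x := by
    refine Asymptotics.IsBigO.trans_isLittleO ?_ hrem
    refine Asymptotics.IsBigO.of_bound ‖P‖ (Filter.Eventually.of_forall fun y => ?_)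
    rw [Real.norm_eq_abs, hTdef]
    exact Stmt3Aux.retrace_mul_le P _
  have h_b : (fun y => ((cfc (fun r : ℝ => r ^ β) (Ξ y)).trace).re
      - ((cfc (fun r : ℝ => r ^ β) A).trace).re - T (Ξ y - A)) =o[nhds x] fun y => y - x := by
    have hO1 : (fun y => ((cfc (fun r : ℝ => r ^ β) (Ξ y)).trace).re
        - ((cfc (fun r : ℝ => r ^ β) A).trace).re - T (Ξ y - A))
        =O[nhds x] fun y => ‖Ξ y - Ξ x‖ ^ 2 := by
      refine Asymptotics.IsBigO.of_bound L ?_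
      filter_upwards [hkey] with y hy
      rw [Real.norm_eq_abs, Real.norm_eq_abs, abs_of_nonneg (by positivity : (0:ℝ) ≤ ‖Ξ y - Ξ x‖ ^ 2)]
      exact hy
    have hO2 : (fun y => ‖Ξ y - Ξ x‖ ^ 2) =O[nhds x] fun y => (y - x) ^ 2 :=
      hΞO.norm_left.pow 2
    have ho3 : (fun y : ℝ => (y - x) ^ 2) =o[nhds x] fun y => y - x := by
      have h1 : (fun y : ℝ => y - x) =o[nhds x] fun _ => (1 : ℝ) := by
        rw [Asymptotics.isLittleO_one_iff]
        have : Filter.Tendsto (fun y : ℝ => y - x) (nhds x) (nhds (x - x)) :=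
          (continuous_id.sub continuous_const).tendsto x
        simpa using this
      have h2 := h1.mul_isBigO (Asymptotics.isBigO_refl (fun y : ℝ => y - x) (nhds x))
      simpa [pow_two] using h2
    exact (hO1.trans hO2).trans_isLittleO ho3
  exact h_b.add h_a
end

section
/- The sandwiched Rényi divergence at α = 2 dominates: for density operators ρ and positive definite σ, D̃_2(ρ‖σ) = log₂ Tr(ρ σ^(−1/2) ρ σ^(−1/2)) ≥ D(ρ‖σ), where D(ρ‖σ) = Tr(ρ(log₂ρ − log₂σ)) is the Umegaki relative entropy. -/
open scoped Kronecker Matrix ComplexOrder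

attribute [local instance] Matrix.frobeniusNormedAddCommGroup Matrix.frobeniusNormedSpace

section helpers
variable {n : Type*} [Fintype n] [DecidableEq n]

lemma jensen_logb {ι : Type*} (t : Finset ι) (w x : ι → ℝ)
    (hw : ∀ i ∈ t, 0 ≤ w i) (hs : ∑ i ∈ t, w i = 1)
    (hx : ∀ i ∈ t, w i ≠ 0 → 0 < x i) :
    ∑ i ∈ t, w i * Real.logb 2 (x i) ≤ Real.logb 2 (∑ i ∈ t, w i * x i) := by
  classical
  set t' := t.filter (fun i => w i ≠ 0) with ht'
  have hwx : ∑ i ∈ t, w i * x i = ∑ i ∈ t', w i * x i := by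
    rw [ht']
    refine (Finset.sum_filter_of_ne ?_).symm
    intro i _ h hi
    exact h (by simp [hi])
  have hwl : ∑ i ∈ t, w i * Real.logb 2 (x i) = ∑ i ∈ t', w i * Real.logb 2 (x i) := by
    rw [ht']
    refine (Finset.sum_filter_of_ne ?_).symm
    intro i _ h hi
    exact h (by simp [hi])
  have hws : ∑ i ∈ t', w i = 1 := by
    rw [ht', Finset.sum_filter_ne_zero, hs]
  have hconc : ConcaveOn ℝ (Set.Ioi 0) (fun y : ℝ => Real.logb 2 y) := by
    have h := (strictConcaveOn_log_Ioi.concaveOn.smul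
      (c := (Real.log 2)⁻¹) (by positivity))
    have hf : (fun y : ℝ => Real.logb 2 y) = fun x => (Real.log 2)⁻¹ • Real.log x := by
      funext y
      simp [Real.logb, smul_eq_mul, div_eq_inv_mul]
    rw [hf]
    exact h
  have := hconc.le_map_sum (t := t') (w := w) (p := x)
    (fun i hi => hw i (Finset.mem_filter.mp hi).1) hws
    (fun i hi => hx i (Finset.mem_filter.mp hi).1 (Finset.mem_filter.mp hi).2)
  simpa [hwx, hwl, smul_eq_mul] using this

lemma trace_re_diag_conj (d e : n → ℝ) (W : Matrix n n ℂ) :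
    ((Matrix.diagonal (fun i => (d i : ℂ)) *
      (W * Matrix.diagonal (fun j => (e j : ℂ)) * Wᴴ)).trace).re
    = ∑ i, ∑ j, d i * e j * Complex.normSq (W i j) := by
  rw [Matrix.trace, Complex.re_sum]
  refine Finset.sum_congr rfl fun i _ => ?_
  rw [Matrix.diag_apply, Matrix.diagonal_mul, Matrix.mul_apply, Finset.mul_sum, Complex.re_sum]
  refine Finset.sum_congr rfl fun j _ => ?_
  rw [Matrix.mul_diagonal, Matrix.conjTranspose_apply]
  have : (d i : ℂ) * (W i j * (e j : ℂ) * star (W i j))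
      = ((d i * e j * Complex.normSq (W i j) : ℝ) : ℂ) := by
    push_cast
    rw [RCLike.star_def, ← Complex.mul_conj]
    ring
  rw [this, Complex.ofReal_re]

lemma diag_entry_conj (e : n → ℝ) (W : Matrix n n ℂ) (i : n) :
    (W * Matrix.diagonal (fun j => (e j : ℂ)) * Wᴴ) i i
      = ((∑ j, e j * Complex.normSq (W i j) : ℝ) : ℂ) := by
  rw [Matrix.mul_apply, Complex.ofReal_sum]
  refine Finset.sum_congr rfl fun j _ => ?_
  rw [Matrix.mul_diagonal, Matrix.conjTranspose_apply]
  push_cast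
  rw [RCLike.star_def, ← Complex.mul_conj]
  ring

lemma trace_re_quartic (d : n → ℝ) (B : Matrix n n ℂ) (hB : Bᴴ = B) :
    ((Matrix.diagonal (fun i => (d i : ℂ)) * B *
      (Matrix.diagonal (fun i => (d i : ℂ)) * B)).trace).re
    = ∑ i, ∑ k, d i * d k * Complex.normSq (B i k) := by
  rw [Matrix.trace, Complex.re_sum]
  refine Finset.sum_congr rfl fun i _ => ?_
  rw [Matrix.diag_apply, Matrix.mul_apply, Complex.re_sum]
  refine Finset.sum_congr rfl fun k _ => ?_
  rw [Matrix.diagonal_mul, Matrix.diagonal_mul]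
  have hki : B k i = starRingEnd ℂ (B i k) := by
    conv_lhs => rw [← hB]
    rw [Matrix.conjTranspose_apply, RCLike.star_def]
  rw [hki]
  have : (d i : ℂ) * B i k * ((d k : ℂ) * starRingEnd ℂ (B i k))
      = ((d i * d k * Complex.normSq (B i k) : ℝ) : ℂ) := by
    push_cast
    rw [← Complex.mul_conj]
    ring
  rw [this, Complex.ofReal_re]

lemma logb_rpow' {x : ℝ} (hx : 0 < x) (y : ℝ) :
    Real.logb 2 (x ^ y) = y * Real.logb 2 x := by
  simp [Real.logb, Real.log_rpow hx, mul_div_assoc]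

end helpers

theorem stmt18 {n : Type*} [Fintype n] [DecidableEq n]
    (ρ σ : Matrix n n ℂ) (hρ : ρ.PosSemidef) (htr : ρ.trace = 1) (hσ : σ.PosDef) :
    Real.logb 2 (((ρ * mpow σ (-(1/2) : ℝ) * ρ * mpow σ (-(1/2) : ℝ)).trace).re) ≥
      umegaki ρ σ := by
  classical
  have hρh : ρ.IsHermitian := hρ.1
  have hσh : σ.IsHermitian := hσ.1
  set U : Matrix n n ℂ := (hρh.eigenvectorUnitary : Matrix n n ℂ) with hUdef
  set V : Matrix n n ℂ := (hσh.eigenvectorUnitary : Matrix n n ℂ) with hVdef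
  set p : n → ℝ := hρh.eigenvalues with hpdef
  set q : n → ℝ := hσh.eigenvalues with hqdef
  have hUU : star U * U = 1 := by
    rw [hUdef]
    exact (Matrix.mem_unitaryGroup_iff').mp (hρh.eigenvectorUnitary).2
  have hUU' : U * star U = 1 := by
    rw [hUdef]
    exact (Matrix.mem_unitaryGroup_iff).mp (hρh.eigenvectorUnitary).2
  have hVV : star V * V = 1 := by
    rw [hVdef]
    exact (Matrix.mem_unitaryGroup_iff').mp (hσh.eigenvectorUnitary).2
  have hVV' : V * star V = 1 := by
    rw [hVdef]
    exact (Matrix.mem_unitaryGroup_iff).mp (hσh.eigenvectorUnitary).2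
  -- collapse lemmas
  have hu1 : ∀ Z : Matrix n n ℂ, star U * (U * Z) = Z := fun Z => by
    rw [← mul_assoc, hUU, one_mul]
  have hu2 : ∀ Z : Matrix n n ℂ, U * (star U * Z) = Z := fun Z => by
    rw [← mul_assoc, hUU', one_mul]
  have hv1 : ∀ Z : Matrix n n ℂ, star V * (V * Z) = Z := fun Z => by
    rw [← mul_assoc, hVV, one_mul]
  have hv2 : ∀ Z : Matrix n n ℂ, V * (star V * Z) = Z := fun Z => by
    rw [← mul_assoc, hVV', one_mul]
  set Dp : Matrix n n ℂ := Matrix.diagonal (fun i => (p i : ℂ)) with hDp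
  have hρeq : ρ = U * Dp * star U := by
    have := hρh.spectral_theorem
    rw [Unitary.conjStarAlgAut_apply] at this
    exact this
  -- cfc facts
  have hcfcσ : ∀ f : ℝ → ℝ, cfc f σ
      = V * Matrix.diagonal (fun j => (f (q j) : ℂ)) * star V := by
    intro f
    rw [hσh.cfc_eq, Matrix.IsHermitian.cfc]
    rfl
  have hcfcρ : ∀ f : ℝ → ℝ, cfc f ρ
      = U * Matrix.diagonal (fun i => (f (p i) : ℂ)) * star U := by
    intro f
    rw [hρh.cfc_eq, Matrix.IsHermitian.cfc]
    rfl
  have hp0 : ∀ i, 0 ≤ p i := fun i => hρ.eigenvalues_nonneg i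
  have hq0 : ∀ j, 0 < q j := fun j => hσ.eigenvalues_pos j
  set e : n → ℝ := fun j => q j ^ (-(1/2) : ℝ) with hedef
  have he0 : ∀ j, 0 < e j := fun j => Real.rpow_pos_of_pos (hq0 j) _
  set W : Matrix n n ℂ := star U * V with hWdef
  set c : n → n → ℝ := fun i j => Complex.normSq (W i j) with hcdef
  have hc0 : ∀ i j, 0 ≤ c i j := fun i j => Complex.normSq_nonneg _
  have hWH : Wᴴ = star V * U := by
    rw [hWdef, ← Matrix.star_eq_conjTranspose, Matrix.star_mul, star_star]
  have hWW : W * Wᴴ = 1 := by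
    rw [hWH, hWdef, mul_assoc, hv2, hUU]
  have hcsum : ∀ i, ∑ j, c i j = 1 := by
    intro i
    have h : (W * Wᴴ) i i = (1 : Matrix n n ℂ) i i := by rw [hWW]
    rw [Matrix.mul_apply, Matrix.one_apply_eq] at h
    have h2 : ∑ j, ((c i j : ℝ) : ℂ) = 1 := by
      rw [← h]
      refine Finset.sum_congr rfl fun j _ => ?_
      rw [Matrix.conjTranspose_apply, RCLike.star_def, Complex.mul_conj]
    have h3 := congrArg Complex.re h2
    simpa [Complex.re_sum] using h3
  have hptr : ρ.trace = ∑ i, (p i : ℂ) := by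
    rw [hρeq, Matrix.trace_mul_cycle, hUU, one_mul, hDp, Matrix.trace_diagonal]
  have hpsum : ∑ i, p i = 1 := by
    have h3 := congrArg Complex.re (hptr.symm.trans htr)
    simpa [Complex.re_sum] using h3
  set De : Matrix n n ℂ := Matrix.diagonal (fun j => (e j : ℂ)) with hDe
  set B : Matrix n n ℂ := W * De * Wᴴ with hBdef
  have hAeq : mpow σ (-(1/2) : ℝ) = V * De * star V := hcfcσ _
  have hBH : Bᴴ = B := by
    rw [hBdef]
    simp [Matrix.conjTranspose_mul, hDe, Matrix.diagonal_conjTranspose, Pi.star_def,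
      Complex.conj_ofReal, mul_assoc, RCLike.star_def]
  have hquart : ρ * mpow σ (-(1/2) : ℝ) * ρ * mpow σ (-(1/2) : ℝ)
      = U * (Dp * B * (Dp * B)) * star U := by
    rw [hρeq, hAeq, hBdef, hWH, hWdef]
    simp only [mul_assoc, hUU', mul_one, hu1, hu2, hv1, hv2]
  have hT : ((ρ * mpow σ (-(1/2) : ℝ) * ρ * mpow σ (-(1/2) : ℝ)).trace).re
      = ∑ i, ∑ k, p i * p k * Complex.normSq (B i k) := by
    rw [hquart, Matrix.trace_mul_cycle, hUU, one_mul, hDp]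
    exact trace_re_quartic p B hBH
  set b : n → ℝ := fun i => ∑ j, e j * c i j with hbdef
  have hBdiag : ∀ i, B i i = ((b i : ℝ) : ℂ) := fun i => by
    rw [hBdef, hDe]; exact diag_entry_conj e W i
  have hb0 : ∀ i, 0 < b i := by
    intro i
    have hsum : (0:ℝ) < ∑ j, c i j := by rw [hcsum i]; norm_num
    have hex : ∃ j ∈ Finset.univ, (0:ℝ) < c i j := by
      by_contra hcon
      push_neg at hcon
      have : ∑ j, c i j ≤ 0 := Finset.sum_nonpos fun j hj => hcon j hj
      linarith
    obtain ⟨j0, -, hj0⟩ := hex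
    exact Finset.sum_pos' (fun j _ => mul_nonneg (he0 j).le (hc0 i j))
      ⟨j0, Finset.mem_univ _, mul_pos (he0 j0) hj0⟩
  -- Umegaki computation
  have hume : umegaki ρ σ = (∑ i, p i * Real.logb 2 (p i))
      - ∑ i, ∑ j, p i * Real.logb 2 (q j) * c i j := by
    rw [umegaki, mul_sub, Matrix.trace_sub, Complex.sub_re]
    congr 1
    · rw [hcfcρ, hρeq]
      have hh : U * Dp * star U *
          (U * Matrix.diagonal (fun i => ((Real.logb 2 (p i) : ℝ) : ℂ)) * star U)
          = U * (Dp * Matrix.diagonal (fun i => ((Real.logb 2 (p i) : ℝ) : ℂ))) * star U := by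
        simp only [mul_assoc, hu1]
      rw [hh, Matrix.trace_mul_cycle, hUU, one_mul, hDp, Matrix.diagonal_mul_diagonal,
        Matrix.trace_diagonal, Complex.re_sum]
      refine Finset.sum_congr rfl fun i _ => ?_
      rw [← Complex.ofReal_mul, Complex.ofReal_re]
    · rw [hcfcσ, hρeq]
      have hh : U * Dp * star U *
          (V * Matrix.diagonal (fun j => ((Real.logb 2 (q j) : ℝ) : ℂ)) * star V)
          = U * (Dp * (W * Matrix.diagonal (fun j => ((Real.logb 2 (q j) : ℝ) : ℂ)) * Wᴴ))
            * star U := by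
        rw [hWH, hWdef]
        simp only [mul_assoc, hUU', mul_one, hu1, hu2, hv1, hv2]
      rw [hh, Matrix.trace_mul_cycle, hUU, one_mul, hDp]
      exact trace_re_diag_conj p (fun j => Real.logb 2 (q j)) W
  -- scalar part
  set T : ℝ := ((ρ * mpow σ (-(1/2) : ℝ) * ρ * mpow σ (-(1/2) : ℝ)).trace).re with hTdef
  set S : ℝ := ∑ i, p i * (p i * b i ^ 2) with hSdef
  have hST : S ≤ T := by
    rw [hSdef, hT]
    refine Finset.sum_le_sum fun i _ => ?_
    have hdiag : p i * (p i * b i ^ 2) = p i * p i * Complex.normSq (B i i) := by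
      rw [hBdiag i, Complex.normSq_ofReal]; ring
    rw [hdiag]
    exact Finset.single_le_sum
      (fun k _ => mul_nonneg (mul_nonneg (hp0 i) (hp0 k)) (Complex.normSq_nonneg _))
      (Finset.mem_univ i)
  have hSpos : 0 < S := by
    have hsum1 : (0:ℝ) < ∑ i, p i := by rw [hpsum]; norm_num
    have hex : ∃ i ∈ Finset.univ, (0:ℝ) < p i := by
      by_contra hcon
      push_neg at hcon
      have : ∑ i, p i ≤ 0 := Finset.sum_nonpos fun i hi => hcon i hi
      linarith
    obtain ⟨i0, -, hi0⟩ := hex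
    rw [hSdef]
    exact Finset.sum_pos'
      (fun i _ => mul_nonneg (hp0 i) (mul_nonneg (hp0 i) (sq_nonneg _)))
      ⟨i0, Finset.mem_univ _, mul_pos hi0 (mul_pos hi0 (pow_pos (hb0 i0) 2))⟩
  have hjen1 : ∑ i, p i * Real.logb 2 (p i * b i ^ 2) ≤ Real.logb 2 S :=
    jensen_logb Finset.univ p (fun i => p i * b i ^ 2) (fun i _ => hp0 i) hpsum
      (fun i _ hne => mul_pos ((hp0 i).lt_of_ne (Ne.symm hne)) (pow_pos (hb0 i) 2))
  have hsplit : ∀ i, p i * Real.logb 2 (p i * b i ^ 2)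
      = p i * Real.logb 2 (p i) + 2 * (p i * Real.logb 2 (b i)) := by
    intro i
    rcases eq_or_ne (p i) 0 with h | h
    · simp [h]
    · rw [Real.logb_mul h (pow_pos (hb0 i) 2).ne', Real.logb_pow]
      ring
  have hjen2 : ∀ i, (∑ j, (-(1/2 : ℝ)) * Real.logb 2 (q j) * c i j) ≤ Real.logb 2 (b i) := by
    intro i
    have h := jensen_logb Finset.univ (c i) (fun j => e j) (fun j _ => hc0 i j) (hcsum i)
      (fun j _ _ => he0 j)
    have h1 : ∑ j, c i j * Real.logb 2 (e j)
        = ∑ j, (-(1/2 : ℝ)) * Real.logb 2 (q j) * c i j := by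
      refine Finset.sum_congr rfl fun j _ => ?_
      rw [hedef]
      rw [Real.logb_rpow_eq_mul_logb_of_pos (hq0 j)]
      ring
    have h2 : ∑ j, c i j * e j = b i := by
      rw [hbdef]
      exact Finset.sum_congr rfl fun j _ => mul_comm _ _
    rw [h1, h2] at h
    exact h
  have hfinal : umegaki ρ σ ≤ Real.logb 2 S := by
    rw [hume]
    have hstep : ∀ i, - (∑ j, p i * Real.logb 2 (q j) * c i j)
        ≤ 2 * (p i * Real.logb 2 (b i)) := by
      intro i
      have h := mul_le_mul_of_nonneg_left (hjen2 i)
        (mul_nonneg (by norm_num : (0:ℝ) ≤ 2) (hp0 i))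
      calc - (∑ j, p i * Real.logb 2 (q j) * c i j)
          = (2 * p i) * (∑ j, (-(1/2 : ℝ)) * Real.logb 2 (q j) * c i j) := by
            rw [Finset.mul_sum, ← Finset.sum_neg_distrib]
            exact Finset.sum_congr rfl fun j _ => by ring
        _ ≤ (2 * p i) * Real.logb 2 (b i) := h
        _ = 2 * (p i * Real.logb 2 (b i)) := by ring
    have hsum2 : - ∑ i, ∑ j, p i * Real.logb 2 (q j) * c i j
        ≤ ∑ i, 2 * (p i * Real.logb 2 (b i)) := by
      rw [← Finset.sum_neg_distrib]
      exact Finset.sum_le_sum fun i _ => hstep i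
    have heq1 : ∑ i, (p i * Real.logb 2 (p i) + 2 * (p i * Real.logb 2 (b i)))
        = ∑ i, p i * Real.logb 2 (p i * b i ^ 2) :=
      Finset.sum_congr rfl fun i _ => (hsplit i).symm
    have heq2 := Finset.sum_add_distrib (s := Finset.univ)
      (f := fun i => p i * Real.logb 2 (p i)) (g := fun i => 2 * (p i * Real.logb 2 (b i)))
    linarith [hjen1, heq1 ▸ heq2]
  have hlog : Real.logb 2 S ≤ Real.logb 2 T :=
    Real.logb_le_logb_of_le (by norm_num) hSpos hST
  rw [ge_iff_le]
  exact hfinal.trans hlog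
end
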